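/- arXiv:1101.3427 — 2 statements merged into one kernel-verified Lean document; each statement's English description precedes it below -/
import Mathlib

section
/- Let N ≥ 1, m ≥ 1, ℓ ≥ 0 be integers and let λ' = (λ'_1 ≥ … ≥ λ'_m ≥ 0) be a partition of length m with λ'_1 − λ'_m ≤ ℓ. Then the m-staircase Schur polynomial s_{λ(N,m,ℓ,λ')} ∈ ℂ[z_1,…,z_N] satisfies the (m,ℓ)-wheel condition: for every choice of m+1 distinct indices i_1,…,i_{m+1} in {1,…,N} and every choice of m+1 distinct integers k_1,…,k_{m+1} in {1,…,ℓ+m}, substituting z_{i_a} = q^{k_a} w for a = 1,…,m+1 (where w is a new indeterminate and q = exp(2πi/(ℓ+m))) yields the zero polynomial in the remaining variables and w. -/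
/-- The shifted Vandermonde determinant `Δ_λ(v) = det (v_i ^ (λ_j + N - j))`
(indices `j` one-based, so the exponent is `λ j + (N - 1 - j)` for zero-based `j`). -/
def shiftedVdm {R : Type*} [CommRing R] {N : ℕ} (lam : Fin N → ℕ) (v : Fin N → R) : R :=
  Matrix.det (Matrix.of fun i j : Fin N => v i ^ (lam j + (N - 1 - (j : ℕ))))

/-- The Vandermonde product `Δ(v) = ∏_{i<j} (v i - v j)`. -/
def vdmProd {R : Type*} [CommRing R] {N : ℕ} (v : Fin N → R) : R :=
  ∏ i : Fin N, ∏ j ∈ Finset.Ioi i, (v i - v j)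

/-- The 2-staircase partition `λ_{n,ℓ,ℓ'}` of length `2n`:
its `(2j-1)`-th part is `(n-j)ℓ + ℓ'` and its `(2j)`-th part is `(n-j)ℓ` (1-based). -/
def twoStaircase (n ℓ ℓ' : ℕ) : Fin (2 * n) → ℕ := fun t =>
  if (t : ℕ) % 2 = 0 then (n - 1 - (t : ℕ) / 2) * ℓ + ℓ'
  else (n - ((t : ℕ) + 1) / 2) * ℓ

/-- The staircase partition `μ_{N,h} = ((N-1)h, (N-2)h, …, h, 0)`. -/
def staircasePart (N h : ℕ) : Fin N → ℕ := fun t => (N - 1 - (t : ℕ)) * h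

/-- `exp(2πi/d)`. -/
noncomputable def qRoot (d : ℕ) : ℂ := Complex.exp (2 * Real.pi * Complex.I / (d : ℂ))

/-- The `m`-staircase partition `λ(N,m,ℓ,λ')` of length `N`: its `j`-th part (1-based) is
`ℓa + λ'_{m-b}` where `N - j = am + b`, `a ≥ 0`, `0 ≤ b ≤ m-1`. -/
def mStaircase (N m ℓ : ℕ) (hm : 0 < m) (lam' : Fin m → ℕ) : Fin N → ℕ := fun t =>
  ℓ * ((N - 1 - (t : ℕ)) / m) +
    lam' ⟨m - 1 - (N - 1 - (t : ℕ)) % m, by omega⟩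

open MvPolynomial in
/-- A polynomial `P ∈ ℂ[z_1,…,z_N]` satisfies the `(m,ℓ)`-wheel condition if substituting
`z_{i_a} = q^{k_a} w` (with `q = exp(2πi/(ℓ+m))`, `w` a fresh variable) for any `m+1` distinct
indices `i_a` and any `m+1` distinct `k_a ∈ {1,…,ℓ+m}` yields the zero polynomial.  The
substitution is encoded by an assignment `g` fixing all other variables. -/
def WheelCondition (N m ℓ : ℕ) (P : MvPolynomial (Fin N) ℂ) : Prop :=
  ∀ idx : Fin (m + 1) → Fin N, Function.Injective idx →
  ∀ ks : Fin (m + 1) → ℕ, Function.Injective ks → (∀ a, 1 ≤ ks a ∧ ks a ≤ ℓ + m) →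
  ∀ g : Fin N → MvPolynomial (Fin N ⊕ Unit) ℂ,
    (∀ a, g (idx a) = C (qRoot (ℓ + m) ^ ks a) * X (Sum.inr ())) →
    (∀ r, (∀ a, idx a ≠ r) → g r = X (Sum.inl r)) →
    MvPolynomial.aeval g P = 0

open MvPolynomial

-- |q^k| = 1
lemma qpow_abs (d k : ℕ) (hd : d ≠ 0) : ‖qRoot d ^ k‖ = 1 := by
  have hq : IsPrimitiveRoot (qRoot d) d := by
    simpa [qRoot] using Complex.isPrimitiveRoot_exp d hd
  have h1 : ‖qRoot d‖ = 1 := by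
    have := Complex.norm_eq_one_of_pow_eq_one hq.pow_eq_one hd
    simpa using this
  rw [norm_pow, h1, one_pow]

-- injectivity of the substituted evaluation point
lemma u_inj (N m ℓ d : ℕ) (hd : d = ℓ + m) (hm : 1 ≤ m)
    (idx : Fin (m + 1) → Fin N) (hidx : Function.Injective idx)
    (ks : Fin (m + 1) → ℕ) (hks : Function.Injective ks)
    (hksr : ∀ a, 1 ≤ ks a ∧ ks a ≤ d)
    (u : Fin N → ℂ)
    (hu1 : ∀ a, u (idx a) = qRoot d ^ ks a)
    (hu2 : ∀ r, (∀ a, idx a ≠ r) → u r = ((r : ℕ) : ℂ) + 2) :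
    Function.Injective u := by
  have hd0 : d ≠ 0 := by omega
  have habs : ∀ r : Fin N, ‖((r : ℕ) : ℂ) + 2‖ = (r : ℕ) + 2 := by
    intro r
    rw [show ((r : ℕ) : ℂ) + 2 = (((r : ℕ) + 2 : ℕ) : ℂ) by push_cast; ring]
    rw [Complex.norm_natCast]
    push_cast; ring
  intro r r' h
  by_contra hne
  by_cases h1 : ∃ a, idx a = r <;> by_cases h2 : ∃ a, idx a = r'
  · obtain ⟨a, ha⟩ := h1; obtain ⟨a', ha'⟩ := h2
    rw [← ha, ← ha', hu1, hu1] at h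
    have : ks a = ks a' := by
      have hq : IsPrimitiveRoot (qRoot d) d := by
        simpa [qRoot] using Complex.isPrimitiveRoot_exp d hd0
      have e1 : qRoot d ^ ks a = qRoot d ^ (ks a % d) := pow_eq_pow_mod _ hq.pow_eq_one
      have e2 : qRoot d ^ ks a' = qRoot d ^ (ks a' % d) := pow_eq_pow_mod _ hq.pow_eq_one
      have hmod : ks a % d = ks a' % d := by
        refine hq.pow_inj (Nat.mod_lt _ (by omega)) (Nat.mod_lt _ (by omega)) ?_
        rw [← e1, ← e2]; exact h
      have hA := hksr a; have hB := hksr a'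
      rcases lt_or_eq_of_le hA.2 with hc | hc <;> rcases lt_or_eq_of_le hB.2 with hc' | hc'
      · rwa [Nat.mod_eq_of_lt hc, Nat.mod_eq_of_lt hc'] at hmod
      · rw [Nat.mod_eq_of_lt hc, hc', Nat.mod_self] at hmod; omega
      · rw [Nat.mod_eq_of_lt hc', hc, Nat.mod_self] at hmod; omega
      · omega
    exact hne (by rw [← ha, ← ha', hks this])
  · push_neg at h2
    obtain ⟨a, ha⟩ := h1
    rw [← ha, hu1, hu2 r' h2] at h
    have := congrArg (‖·‖) h
    rw [qpow_abs d _ hd0, habs] at this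
    have : (2 : ℝ) ≤ 1 := by
      have h2r : (0 : ℝ) ≤ (r' : ℕ) := Nat.cast_nonneg _
      linarith [this.symm]
    linarith
  · push_neg at h1
    obtain ⟨a, ha⟩ := h2
    rw [← ha, hu1, hu2 r h1] at h
    have := congrArg (‖·‖) h
    rw [qpow_abs d _ hd0, habs] at this
    have h2r : (0 : ℝ) ≤ (r : ℕ) := Nat.cast_nonneg _
    linarith
  · push_neg at h1; push_neg at h2
    rw [hu2 r h1, hu2 r' h2] at h
    have : ((r : ℕ) : ℂ) = ((r' : ℕ) : ℂ) := by linear_combination h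
    exact hne (Fin.ext (by exact_mod_cast this))

-- det-zero lemma
lemma aux_detZero (N m ℓ : ℕ) (hm : 1 ≤ m) (lam' : Fin m → ℕ)
    (idx : Fin (m + 1) → Fin N) (hidx : Function.Injective idx)
    (ks : Fin (m + 1) → ℕ)
    (g : Fin N → MvPolynomial (Fin N ⊕ Unit) ℂ)
    (hg1 : ∀ a, g (idx a) = C (qRoot (ℓ + m) ^ ks a) * X (Sum.inr ())) :
    MvPolynomial.aeval g (shiftedVdm (mStaircase N m ℓ hm lam') (fun i => (X i : MvPolynomial (Fin N) ℂ))) = 0 := by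
  classical
  set d := ℓ + m with hd
  set q := qRoot d with hq
  set e : Fin N → ℕ := fun j => mStaircase N m ℓ hm lam' j + (N - 1 - (j : ℕ)) with he
  set ρ : Fin m → ℕ := fun b => ((b : ℕ) + lam' ⟨m - 1 - (b : ℕ), by omega⟩) % d with hρ
  -- residues
  have hres : ∀ j : Fin N, ∃ b : Fin m, e j % d = ρ b := by
    intro j
    refine ⟨⟨(N - 1 - (j : ℕ)) % m, Nat.mod_lt _ hm⟩, ?_⟩
    show (ℓ * ((N - 1 - (j : ℕ)) / m) + lam' _ + (N - 1 - (j : ℕ))) % d = _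
    set s := N - 1 - (j : ℕ) with hs
    have h1 := Nat.div_add_mod s m
    have h3 : (ℓ + m) * (s / m) = ℓ * (s / m) + m * (s / m) := by ring
    have h2 : ℓ * (s / m) + lam' ⟨m - 1 - s % m, by omega⟩ + s
        = (s % m + lam' ⟨m - 1 - s % m, by omega⟩) + d * (s / m) := by
      rw [hd]; omega
    rw [h2, Nat.add_mul_mod_self_left]
  -- the complex linear dependence
  have hdep : ∃ c : Fin (m + 1) → ℂ, c ≠ 0 ∧ ∀ b : Fin m, ∑ a, (q ^ ks a) ^ ρ b * c a = 0 := by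
    set A : Matrix (Fin (m + 1)) (Fin (m + 1)) ℂ :=
      Matrix.of (fun b a => if h : (b : ℕ) < m then (q ^ ks a) ^ ρ ⟨b, h⟩ else 0) with hA
    have hdet : A.det = 0 := by
      apply Matrix.det_eq_zero_of_row_eq_zero (⟨m, by omega⟩ : Fin (m + 1))
      intro j; simp [hA]
    obtain ⟨c, hc0, hc⟩ := Matrix.exists_mulVec_eq_zero_iff.mpr hdet
    refine ⟨c, hc0, fun b => ?_⟩
    have := congrFun hc ⟨(b : ℕ), by omega⟩
    simpa [hA, Matrix.mulVec, dotProduct, b.2] using this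
  obtain ⟨c, hc0, hcb⟩ := hdep
  -- map the determinant
  rw [shiftedVdm]
  rw [AlgHom.map_det]
  -- the mapped matrix
  have hM : (MvPolynomial.aeval g).mapMatrix
      (Matrix.of fun i j : Fin N =>
        (X i : MvPolynomial (Fin N) ℂ) ^ (mStaircase N m ℓ hm lam' j + (N - 1 - (j : ℕ))))
      = Matrix.of (fun i j : Fin N => (g i) ^ e j) := by
    refine Matrix.ext fun i j => ?_
    rw [AlgHom.mapMatrix_apply, Matrix.map_apply, Matrix.of_apply, Matrix.of_apply]
    rw [map_pow, aeval_X]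
  rw [hM]
  -- linear dependence of rows
  apply Matrix.exists_vecMul_eq_zero_iff.mp
  refine ⟨fun r => ∑ a, if idx a = r then C (c a) else 0, ?_, ?_⟩
  · obtain ⟨a₀, ha₀⟩ := Function.ne_iff.mp hc0
    intro hv
    have := congrFun hv (idx a₀)
    rw [Finset.sum_eq_single a₀] at this
    · rw [if_pos rfl] at this
      exact ha₀ (by simpa using this)
    · intro a _ hne
      rw [if_neg (fun hh => hne (hidx hh))]
    · intro hh; exact absurd (Finset.mem_univ a₀) hh
  · funext j
    obtain ⟨b, hb⟩ := hres j
    have hζd : ∀ a, (q ^ ks a) ^ d = 1 := by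
      intro a
      have hq' : IsPrimitiveRoot q d := by
        simpa [hq, qRoot] using Complex.isPrimitiveRoot_exp d (by omega)
      rw [← pow_mul, mul_comm, pow_mul, hq'.pow_eq_one, one_pow]
    have hpow : ∀ a, (q ^ ks a) ^ e j = (q ^ ks a) ^ ρ b := by
      intro a
      rw [pow_eq_pow_mod _ (hζd a), hb]
    show (Matrix.vecMul _ _) j = 0
    rw [Matrix.vecMul]
    simp only [dotProduct, Finset.sum_mul, ite_mul, zero_mul]
    have hinner : ∀ a : Fin (m + 1),
        (∑ r : Fin N, if idx a = r then C (c a) * (Matrix.of (fun i j : Fin N => (g i) ^ e j)) r j else 0)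
          = C (c a * (q ^ ks a) ^ ρ b) * (X (Sum.inr ()) : MvPolynomial (Fin N ⊕ Unit) ℂ) ^ e j := by
      intro a
      rw [Finset.sum_ite_eq Finset.univ (idx a)]
      rw [if_pos (Finset.mem_univ _)]
      rw [Matrix.of_apply, hg1 a, mul_pow, ← C_pow, hpow a, C_mul]
      ring
    calc (∑ r : Fin N, ∑ a : Fin (m+1), if idx a = r then C (c a) * (Matrix.of (fun i j : Fin N => (g i) ^ e j)) r j else 0)
        = ∑ a : Fin (m+1), ∑ r : Fin N, if idx a = r then C (c a) * (Matrix.of (fun i j : Fin N => (g i) ^ e j)) r j else 0 := Finset.sum_comm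
      _ = ∑ a : Fin (m+1), C (c a * (q ^ ks a) ^ ρ b) * (X (Sum.inr ()) : MvPolynomial (Fin N ⊕ Unit) ℂ) ^ e j := by
          exact Finset.sum_congr rfl fun a _ => hinner a
      _ = C (∑ a : Fin (m+1), c a * (q ^ ks a) ^ ρ b) * (X (Sum.inr ()) : MvPolynomial (Fin N ⊕ Unit) ℂ) ^ e j := by
          rw [← Finset.sum_mul, ← map_sum]
      _ = 0 := by
          have : (∑ a : Fin (m+1), c a * (q ^ ks a) ^ ρ b) = 0 := by
            rw [← hcb b]; exact Finset.sum_congr rfl fun a _ => mul_comm _ _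
          rw [this, map_zero, zero_mul]

open MvPolynomial in
/-- The `m`-staircase Schur polynomial `s_{λ(N,m,ℓ,λ')}` (characterized by `Δ_λ = S * Δ`)
satisfies the `(m,ℓ)`-wheel condition, for any partition `λ'` of length `m` with
`λ'_1 - λ'_m ≤ ℓ`. -/
theorem mStaircase_wheel (N m ℓ : ℕ) (hN : 1 ≤ N) (hm : 1 ≤ m)
    (lam' : Fin m → ℕ)
    (hanti : ∀ i j : Fin m, i ≤ j → lam' j ≤ lam' i)
    (hgap : lam' ⟨0, hm⟩ - lam' ⟨m - 1, by omega⟩ ≤ ℓ)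
    (S : MvPolynomial (Fin N) ℂ)
    (hS : shiftedVdm (mStaircase N m ℓ hm lam') (fun i => X i)
        = S * vdmProd (fun i => X i)) :
    WheelCondition N m ℓ S := by
  classical
  intro idx hidx ks hks hksr g hg1 hg2
  set d := ℓ + m with hd
  have hd0 : d ≠ 0 := by omega
  -- apply aeval g to hS
  have hmain := congrArg (MvPolynomial.aeval g) hS
  rw [map_mul] at hmain
  rw [aux_detZero N m ℓ hm lam' idx hidx ks g hg1] at hmain
  -- the Vandermonde factor is nonzero
  have hvdm : MvPolynomial.aeval g (vdmProd (fun i => (X i : MvPolynomial (Fin N) ℂ))) ≠ 0 := by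
    set p : Fin N ⊕ Unit → ℂ := Sum.elim (fun r : Fin N => ((r : ℕ) : ℂ) + 2) (fun _ => 1)
      with hp
    set u : Fin N → ℂ := fun r => eval p (g r) with hu
    have hu1 : ∀ a, u (idx a) = qRoot d ^ ks a := by
      intro a
      rw [hu]
      simp only [hg1 a]
      simp [hp]
    have hu2 : ∀ r : Fin N, (∀ a, idx a ≠ r) → u r = ((r : ℕ) : ℂ) + 2 := by
      intro r hr
      rw [hu]
      simp only [hg2 r hr]
      simp [hp]
    have huinj : Function.Injective u := u_inj N m ℓ d hd hm idx hidx ks hks hksr u hu1 hu2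
    intro h0
    have hev : eval p (MvPolynomial.aeval g (vdmProd (fun i => (X i : MvPolynomial (Fin N) ℂ))))
        = ∏ i : Fin N, ∏ j ∈ Finset.Ioi i, (u i - u j) := by
      rw [vdmProd]
      rw [map_prod, map_prod]
      refine Finset.prod_congr rfl fun i _ => ?_
      rw [map_prod, map_prod]
      refine Finset.prod_congr rfl fun j _ => ?_
      rw [map_sub, map_sub, aeval_X, aeval_X]
    rw [h0, map_zero] at hev
    have : (∏ i : Fin N, ∏ j ∈ Finset.Ioi i, (u i - u j)) ≠ 0 := by
      rw [Finset.prod_ne_zero_iff]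
      intro i _
      rw [Finset.prod_ne_zero_iff]
      intro j hj
      exact sub_ne_zero.mpr (huinj.ne (ne_of_lt (Finset.mem_Ioi.mp hj)))
    exact this hev.symm
  rcases mul_eq_zero.mp hmain.symm with h | h
  · exact h
  · exact absurd h hvdm
end

section
/- Let m ≥ 1, ℓ ≥ 0 and N ≥ 1 be integers, and write N = am + b with a ≥ 0 and 1 ≤ b ≤ m. Let s_{N,m,ℓ} ∈ ℂ[z_1,…,z_N] denote the m-staircase Schur polynomial associated with the zero partition λ' = (0,…,0) of length m. Then: (i) the total degree of s_{N,m,ℓ} equals aℓ(m(a−1)/2 + b); (ii) the degree of s_{N,m,ℓ} in each single variable z_i equals aℓ; and (iii) if N ≥ m, the maximal combined degree of s_{N,m,ℓ} in any m of its variables — i.e., the maximum over monomials z^α occurring in s_{N,m,ℓ} and over m-element subsets S ⊆ {1,…,N} of Σ_{i∈S} α_i — equals (N−m)ℓ. -/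
namespace MStaircaseAux

open MvPolynomial Finset


/-! ### weighted degree machinery -/

noncomputable def Dw {N : ℕ} (T : Finset (Fin N)) (p : MvPolynomial (Fin N) ℂ) : ℕ :=
  p.support.sup fun α => ∑ i ∈ T, α i

noncomputable def phiT {N : ℕ} (T : Finset (Fin N)) :
    MvPolynomial (Fin N) ℂ →ₐ[ℂ] Polynomial (MvPolynomial (Fin N) ℂ) :=
  MvPolynomial.aeval (fun i => Polynomial.C (X i) * Polynomial.X ^ (if i ∈ T then 1 else 0))

lemma phiT_monomial {N : ℕ} (T : Finset (Fin N)) (α : Fin N →₀ ℕ) (c : ℂ) :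
    phiT T (monomial α c) = Polynomial.C (monomial α c) * Polynomial.X ^ (∑ i ∈ T, α i) := by
  rw [phiT, aeval_monomial]
  have h1 : (α.prod fun n e => (Polynomial.C (X n : MvPolynomial (Fin N) ℂ)
        * Polynomial.X ^ (if n ∈ T then 1 else 0)) ^ e)
      = Polynomial.C (α.prod fun n e => (X n : MvPolynomial (Fin N) ℂ) ^ e)
        * Polynomial.X ^ (∑ n ∈ α.support, (if n ∈ T then 1 else 0) * α n) := by
    rw [Finsupp.prod, Finsupp.prod]
    simp only [mul_pow, ← Polynomial.C_pow, ← pow_mul]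
    rw [Finset.prod_mul_distrib, ← map_prod, Finset.prod_pow_eq_pow_sum]
  rw [h1]
  have h2 : (∑ n ∈ α.support, (if n ∈ T then 1 else 0) * α n) = ∑ i ∈ T, α i := by
    rw [Finset.sum_subset (Finset.subset_univ α.support)]
    · simp only [ite_mul, one_mul, zero_mul]
      rw [Finset.sum_ite_mem, Finset.univ_inter]
    · intro x _ hx
      simp [Finsupp.notMem_support_iff.mp hx]
  rw [h2]
  rw [show (algebraMap ℂ (Polynomial (MvPolynomial (Fin N) ℂ))) c
      = Polynomial.C (MvPolynomial.C c) by rfl]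
  rw [← mul_assoc, ← Polynomial.C_mul, ← monomial_eq]

lemma phiT_coeff {N : ℕ} (T : Finset (Fin N)) (p : MvPolynomial (Fin N) ℂ) (d : ℕ) :
    (phiT T p).coeff d
      = ∑ α ∈ p.support.filter (fun α => ∑ i ∈ T, α i = d), monomial α (p.coeff α) := by
  conv_lhs => rw [← support_sum_monomial_coeff p]
  rw [map_sum, Polynomial.finset_sum_coeff, Finset.sum_filter]
  refine Finset.sum_congr rfl fun α _ => ?_
  rw [phiT_monomial, Polynomial.coeff_C_mul, Polynomial.coeff_X_pow]
  split_ifs with h1 h2 h2 <;> simp_all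

lemma phiT_coeff_coeff {N : ℕ} (T : Finset (Fin N)) (p : MvPolynomial (Fin N) ℂ)
    {α : Fin N →₀ ℕ} (hα : α ∈ p.support) :
    ((phiT T p).coeff (∑ i ∈ T, α i)).coeff α = p.coeff α := by
  rw [phiT_coeff, MvPolynomial.coeff_sum]
  rw [Finset.sum_eq_single_of_mem α
    (show α ∈ p.support.filter (fun β => ∑ i ∈ T, β i = ∑ i ∈ T, α i) from
      Finset.mem_filter.mpr ⟨hα, rfl⟩)
    (fun β _ hβ => by rw [coeff_monomial, if_neg hβ])]
  simp [coeff_monomial]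

lemma phiT_ne_zero {N : ℕ} (T : Finset (Fin N)) {p : MvPolynomial (Fin N) ℂ} (hp : p ≠ 0) :
    phiT T p ≠ 0 := by
  obtain ⟨α, hα⟩ := MvPolynomial.support_nonempty.mpr hp
  intro h
  have := phiT_coeff_coeff T p hα
  rw [h] at this
  simp only [Polynomial.coeff_zero, MvPolynomial.coeff_zero] at this
  exact (MvPolynomial.mem_support_iff.mp hα) this.symm

lemma natDegree_phiT {N : ℕ} (T : Finset (Fin N)) {p : MvPolynomial (Fin N) ℂ} (hp : p ≠ 0) :
    (phiT T p).natDegree = Dw T p := by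
  apply le_antisymm
  · rw [Polynomial.natDegree_le_iff_coeff_eq_zero]
    intro d hd
    rw [phiT_coeff]
    have : p.support.filter (fun α => ∑ i ∈ T, α i = d) = ∅ := by
      rw [Finset.filter_eq_empty_iff]
      intro α hα h
      have : (∑ i ∈ T, α i) ≤ Dw T p := by
        unfold Dw; exact Finset.le_sup (f := fun α : Fin N →₀ ℕ => ∑ i ∈ T, α i) hα
      omega
    rw [this, Finset.sum_empty]
  · obtain ⟨α, hα, hs⟩ := Finset.exists_mem_eq_sup _
      (MvPolynomial.support_nonempty.mpr hp) (fun α : Fin N →₀ ℕ => ∑ i ∈ T, α i)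
    rw [show Dw T p = ∑ i ∈ T, α i from hs]
    apply Polynomial.le_natDegree_of_ne_zero
    intro h
    have := phiT_coeff_coeff T p hα
    rw [h] at this
    exact (MvPolynomial.mem_support_iff.mp hα) (by simpa using this.symm)

lemma Dw_mul {N : ℕ} (T : Finset (Fin N)) {p q : MvPolynomial (Fin N) ℂ}
    (hp : p ≠ 0) (hq : q ≠ 0) : Dw T (p * q) = Dw T p + Dw T q := by
  have h := Polynomial.natDegree_mul (phiT_ne_zero T hp) (phiT_ne_zero T hq)
  rw [← map_mul] at h
  rw [← natDegree_phiT T (mul_ne_zero hp hq), ← natDegree_phiT T hp, ← natDegree_phiT T hq]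
  exact h

lemma Dw_neg {N : ℕ} (T : Finset (Fin N)) (p : MvPolynomial (Fin N) ℂ) :
    Dw T (-p) = Dw T p := by
  unfold Dw
  rw [MvPolynomial.support_neg]

lemma le_Dw {N : ℕ} (T : Finset (Fin N)) {p : MvPolynomial (Fin N) ℂ}
    {α : Fin N →₀ ℕ} (hα : α ∈ p.support) : ∑ i ∈ T, α i ≤ Dw T p := by
  unfold Dw; exact Finset.le_sup (f := fun α : Fin N →₀ ℕ => ∑ i ∈ T, α i) hα
/-! ### the determinant `det (X i ^ e j)` -/

noncomputable def permMono {N : ℕ} (e : Fin N → ℕ) (σ : Equiv.Perm (Fin N)) : Fin N →₀ ℕ :=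
  Finsupp.equivFunOnFinite.symm fun i => e (σ i)

lemma permMono_apply {N : ℕ} (e : Fin N → ℕ) (σ : Equiv.Perm (Fin N)) (i : Fin N) :
    permMono e σ i = e (σ i) := rfl

noncomputable def detX {N : ℕ} (e : Fin N → ℕ) : MvPolynomial (Fin N) ℂ :=
  Matrix.det (Matrix.of fun i j : Fin N => (X i : MvPolynomial (Fin N) ℂ) ^ e j)

lemma prod_X_pow_permMono {N : ℕ} (e : Fin N → ℕ) (σ : Equiv.Perm (Fin N)) :
    (∏ j : Fin N, (X j : MvPolynomial (Fin N) ℂ) ^ e (σ j))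
      = monomial (permMono e σ) 1 := by
  rw [← MvPolynomial.prod_X_pow_eq_monomial]
  rw [Finset.prod_subset (Finset.subset_univ (permMono e σ).support)]
  · exact Finset.prod_congr rfl fun j _ => by rw [permMono_apply]
  · intro x _ hx
    rw [Finsupp.notMem_support_iff.mp hx, pow_zero]

lemma detX_eq {N : ℕ} (e : Fin N → ℕ) :
    detX e = ∑ σ : Equiv.Perm (Fin N),
      Equiv.Perm.sign σ • (monomial (permMono e σ) (1 : ℂ)) := by
  rw [detX, Matrix.det_apply]
  rw [← Equiv.sum_comp (Equiv.inv (Equiv.Perm (Fin N)))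
    (fun σ => Equiv.Perm.sign σ • (monomial (permMono e σ) (1 : ℂ)))]
  refine Finset.sum_congr rfl fun σ _ => ?_
  simp only [Equiv.inv_apply, Equiv.Perm.sign_inv]
  congr 1
  rw [← prod_X_pow_permMono e σ⁻¹]
  rw [← Equiv.prod_comp σ (fun j => (X j : MvPolynomial (Fin N) ℂ) ^ e (σ⁻¹ j))]
  exact Finset.prod_congr rfl fun i _ => by rw [Matrix.of_apply, ← Equiv.Perm.mul_apply, inv_mul_cancel, Equiv.Perm.one_apply]

lemma permMono_injective {N : ℕ} {e : Fin N → ℕ} (he : Function.Injective e) :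
    Function.Injective (permMono (N := N) e) := by
  intro σ τ h
  apply Equiv.ext
  intro i
  have : permMono e σ i = permMono e τ i := by rw [h]
  rw [permMono_apply, permMono_apply] at this
  exact he this

lemma permMono_mem_support {N : ℕ} {e : Fin N → ℕ} (he : Function.Injective e)
    (σ0 : Equiv.Perm (Fin N)) : permMono e σ0 ∈ (detX e).support := by
  rw [MvPolynomial.mem_support_iff, detX_eq, MvPolynomial.coeff_sum]
  rw [Finset.sum_eq_single_of_mem σ0 (Finset.mem_univ σ0)
    (fun τ _ hτ => by
      rw [MvPolynomial.coeff_smul, MvPolynomial.coeff_monomial,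
        if_neg (fun h => hτ (permMono_injective he h)), smul_zero])]
  rw [MvPolynomial.coeff_smul, MvPolynomial.coeff_monomial, if_pos rfl]
  rcases Int.units_eq_one_or (Equiv.Perm.sign σ0) with h | h <;> rw [h] <;> simp

lemma detX_ne_zero {N : ℕ} {e : Fin N → ℕ} (he : Function.Injective e) : detX e ≠ 0 := by
  rw [← MvPolynomial.support_nonempty]
  exact ⟨permMono e 1, permMono_mem_support he 1⟩

lemma detX_support {N : ℕ} (e : Fin N → ℕ) :
    (detX e).support ⊆ Finset.univ.image (permMono e) := by
  rw [detX_eq]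
  refine subset_trans MvPolynomial.support_sum ?_
  intro β hβ
  rw [Finset.mem_biUnion] at hβ
  obtain ⟨σ, _, hβ⟩ := hβ
  have h1 : β ∈ (monomial (permMono e σ) (1 : ℂ)).support :=
    MvPolynomial.support_smul hβ
  have h2 := MvPolynomial.support_monomial_subset h1
  rw [Finset.mem_singleton] at h2
  rw [h2]
  exact Finset.mem_image_of_mem _ (Finset.mem_univ σ)
/-! ### rearrangement -/

lemma strictMono_le_apply' {c N : ℕ} {g : Fin c → Fin N} (hg : StrictMono g) (k : Fin c) :
    (k : ℕ) ≤ (g k : ℕ) := by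
  induction' hn : (k : ℕ) with n ih generalizing k
  · exact Nat.zero_le _
  · have hk' : n < c := by omega
    have h1 := ih ⟨n, hk'⟩ rfl
    have h2 : g ⟨n, hk'⟩ < g k := hg (by rw [Fin.lt_def]; simp [hn])
    rw [Fin.lt_def] at h2
    omega

lemma filter_lt_eq_image {N c : ℕ} (h : c ≤ N) :
    Finset.univ.filter (fun j : Fin N => (j : ℕ) < c)
      = Finset.image (fun k : Fin c => Fin.castLE h k) Finset.univ := by
  ext j
  simp only [Finset.mem_filter, Finset.mem_univ, true_and, Finset.mem_image]
  constructor
  · intro hj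
    exact ⟨⟨(j : ℕ), hj⟩, Fin.ext rfl⟩
  · rintro ⟨k, -, rfl⟩
    exact k.isLt

lemma card_filter_lt {N c : ℕ} (h : c ≤ N) :
    (Finset.univ.filter (fun j : Fin N => (j : ℕ) < c)).card = c := by
  rw [filter_lt_eq_image h,
    Finset.card_image_of_injective _ (Fin.castLE_injective h),
    Finset.card_univ, Fintype.card_fin]

lemma sum_filter_lt {M : Type*} [AddCommMonoid M] {N c : ℕ} (h : c ≤ N) (f : ℕ → M) :
    (∑ j ∈ Finset.univ.filter (fun j : Fin N => (j : ℕ) < c), f (j : ℕ))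
      = ∑ t ∈ Finset.range c, f t := by
  rw [filter_lt_eq_image h,
    Finset.sum_image (fun a _ b _ hab => Fin.castLE_injective h hab)]
  rw [← Fin.sum_univ_eq_sum_range]
  rfl

lemma rearr {N : ℕ} {e : Fin N → ℕ} (hmono : ∀ i j : Fin N, i ≤ j → e j ≤ e i)
    (V : Finset (Fin N)) :
    ∑ j ∈ V, e j
      ≤ ∑ j ∈ Finset.univ.filter (fun j : Fin N => (j : ℕ) < V.card), e j := by
  have hc : V.card ≤ N := by
    simpa using Finset.card_le_univ V
  set c := V.card with hc'
  have hf := V.orderEmbOfFin (k := c) rfl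
  have h1 : V = Finset.image (fun k => (V.orderEmbOfFin rfl k : Fin N)) Finset.univ := by
    apply Finset.coe_injective
    rw [Finset.coe_image, Finset.coe_univ, Set.image_univ, Finset.range_orderEmbOfFin]
  rw [h1, Finset.sum_image (fun a _ b _ hab => (V.orderEmbOfFin rfl).injective hab)]
  rw [filter_lt_eq_image hc,
    Finset.sum_image (fun a _ b _ hab => Fin.castLE_injective hc hab)]
  apply Finset.sum_le_sum
  intro k _
  apply hmono
  rw [Fin.le_def]
  exact strictMono_le_apply' (V.orderEmbOfFin rfl).strictMono k

lemma exists_perm_image {N : ℕ} (T U : Finset (Fin N)) (h : T.card = U.card) :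
    ∃ σ : Equiv.Perm (Fin N), ∀ i, i ∈ T ↔ σ i ∈ U := by
  have hcard : Fintype.card {x // x ∈ T} = Fintype.card {x // x ∈ U} := by
    rw [Fintype.card_coe, Fintype.card_coe, h]
  let e : {x // x ∈ T} ≃ {x // x ∈ U} := Fintype.equivOfCardEq hcard
  refine ⟨e.extendSubtype, fun i => ?_⟩
  constructor
  · intro hi
    exact e.extendSubtype_mem i hi
  · intro hi
    by_contra hne
    exact e.extendSubtype_not_mem i hne hi
/-! ### `Dw` of `detX` -/

lemma Dw_detX {N : ℕ} {e : Fin N → ℕ} (hstrict : ∀ i j : Fin N, i < j → e j < e i)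
    (T : Finset (Fin N)) :
    Dw T (detX e) = ∑ j ∈ Finset.univ.filter (fun j : Fin N => (j : ℕ) < T.card), e j := by
  have hmono : ∀ i j : Fin N, i ≤ j → e j ≤ e i := by
    intro i j hij
    rcases eq_or_lt_of_le hij with h | h
    · rw [h]
    · exact le_of_lt (hstrict i j h)
  have hinj : Function.Injective e := by
    intro i j h
    by_contra hne
    rcases lt_or_gt_of_ne hne with hlt | hlt
    · exact absurd h (Nat.ne_of_gt (hstrict i j hlt))
    · exact absurd h (Nat.ne_of_lt (hstrict j i hlt))
  have hTN : T.card ≤ N := by simpa using Finset.card_le_univ T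
  apply le_antisymm
  · apply Finset.sup_le
    intro α hα
    have hα' := detX_support e hα
    rw [Finset.mem_image] at hα'
    obtain ⟨σ, -, rfl⟩ := hα'
    have h1 : (∑ i ∈ T, permMono e σ i) = ∑ j ∈ T.image σ, e j := by
      rw [Finset.sum_image (fun a _ b _ hab => σ.injective hab)]
      exact Finset.sum_congr rfl fun i _ => permMono_apply e σ i
    rw [h1, ← Finset.card_image_of_injective T σ.injective]
    exact rearr hmono (T.image σ)
  · obtain ⟨σ0, hσ0⟩ := exists_perm_image T
      (Finset.univ.filter (fun j : Fin N => (j : ℕ) < T.card))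
      (by rw [card_filter_lt hTN])
    have himg : T.image σ0 = Finset.univ.filter (fun j : Fin N => (j : ℕ) < T.card) := by
      apply Finset.eq_of_subset_of_card_le
      · intro j hj
        rw [Finset.mem_image] at hj
        obtain ⟨i, hi, rfl⟩ := hj
        exact (hσ0 i).mp hi
      · rw [card_filter_lt hTN, Finset.card_image_of_injective T σ0.injective]
    have h1 : (∑ i ∈ T, permMono e σ0 i)
        = ∑ j ∈ Finset.univ.filter (fun j : Fin N => (j : ℕ) < T.card), e j := by
      rw [← himg, Finset.sum_image (fun a _ b _ hab => σ0.injective hab)]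
      exact Finset.sum_congr rfl fun i _ => permMono_apply e σ0 i
    rw [← h1]
    exact le_Dw T (permMono_mem_support hinj σ0)
/-! ### sign relation between `vdmProd` and the zero shifted Vandermonde -/

lemma vdmProd_sign {R : Type*} [CommRing R] {N : ℕ} (v : Fin N → R) :
    vdmProd v = Matrix.det (Matrix.of fun i j : Fin N => v i ^ (N - 1 - (j : ℕ)))
      ∨ vdmProd v = - Matrix.det (Matrix.of fun i j : Fin N => v i ^ (N - 1 - (j : ℕ))) := by
  set A := Matrix.of fun i j : Fin N => v i ^ (N - 1 - (j : ℕ)) with hA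
  have h1 : Matrix.vandermonde v = A.submatrix id Fin.revPerm := by
    ext i j
    have hj := j.isLt
    simp only [Matrix.vandermonde_apply, Matrix.submatrix_apply, id_eq, hA, Matrix.of_apply,
      Fin.revPerm_apply, Fin.val_rev]
    congr 1
    omega
  have h2 : (∏ i : Fin N, ∏ j ∈ Finset.Ioi i, (v j - v i))
      = (Equiv.Perm.sign (Fin.revPerm : Equiv.Perm (Fin N)) : ℤ) • A.det := by
    rw [← Matrix.det_vandermonde, h1, Matrix.det_permute']
    simp [Units.smul_def, zsmul_eq_mul]
  have h3 : vdmProd v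
      = (-1 : R) ^ (∑ i : Fin N, (Finset.Ioi i).card)
        * ∏ i : Fin N, ∏ j ∈ Finset.Ioi i, (v j - v i) := by
    rw [vdmProd, ← Finset.prod_pow_eq_pow_sum, ← Finset.prod_mul_distrib]
    refine Finset.prod_congr rfl fun i _ => ?_
    rw [← Finset.prod_const (-1 : R), ← Finset.prod_mul_distrib]
    exact Finset.prod_congr rfl fun j _ => by ring
  rw [h3, h2]
  rcases Nat.even_or_odd (∑ i : Fin N, (Finset.Ioi i).card) with hpar | hpar <;>
    rcases Int.units_eq_one_or (Equiv.Perm.sign (Fin.revPerm : Equiv.Perm (Fin N)))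
      with hsg | hsg
  · left; rw [hpar.neg_one_pow, hsg]; simp
  · right; rw [hpar.neg_one_pow, hsg]; simp
  · right; rw [hpar.neg_one_pow, hsg]; simp
  · left; rw [hpar.neg_one_pow, hsg]; simp
/-! ### arithmetic: sums of floors -/

lemma sum_range_div (m : ℕ) (hm : 0 < m) (N : ℕ) :
    ∑ t ∈ Finset.range N, t / m
      = m * Nat.choose (N / m) 2 + (N / m) * (N % m) := by
  induction N with
  | zero => simp
  | succ N ih =>
    rw [Finset.sum_range_succ, ih]
    have hdm := Nat.div_add_mod N m
    set q := N / m with hq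
    set r := N % m with hr
    have hrm : r < m := Nat.mod_lt _ hm
    rcases Nat.lt_or_ge (r + 1) m with h | h
    · have hq1 : (N + 1) / m = q := by
        rw [show N + 1 = m * q + (r + 1) by omega, Nat.mul_add_div hm,
          Nat.div_eq_of_lt h, Nat.add_zero]
      have hr1 : (N + 1) % m = r + 1 := by
        rw [show N + 1 = m * q + (r + 1) by omega, Nat.mul_add_mod, Nat.mod_eq_of_lt h]
      rw [hq1, hr1]
      ring
    · have hm' : r + 1 = m := by omega
      have hN1 : N + 1 = m * (q + 1) := by rw [Nat.mul_succ]; omega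
      have hq1 : (N + 1) / m = q + 1 := by rw [hN1, Nat.mul_div_cancel_left _ hm]
      have hr1 : (N + 1) % m = 0 := by rw [hN1, Nat.mul_mod_right]
      rw [hq1, hr1, Nat.choose_succ_succ, Nat.choose_one_right, ← hm']
      ring

end MStaircaseAux

open MStaircaseAux in
open MvPolynomial in
/-- Degrees of `s_{N,m,ℓ}` (the `m`-staircase Schur polynomial with `λ' = 0`, characterized
by `Δ_λ = S * Δ`), with `N = am + b`, `1 ≤ b ≤ m`:
(i) total degree `aℓ(m(a-1)/2 + b) = ℓ(m·C(a,2) + ab)`;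
(ii) degree `aℓ` in each single variable;
(iii) if `N ≥ m`, maximal combined degree in any `m` variables equal to `(N-m)ℓ`. -/
theorem mStaircase_degrees (N m ℓ a b : ℕ) (hN : 1 ≤ N) (hm : 1 ≤ m)
    (hab : N = a * m + b) (hb1 : 1 ≤ b) (hbm : b ≤ m)
    (S : MvPolynomial (Fin N) ℂ)
    (hS : shiftedVdm (mStaircase N m ℓ hm (fun _ => 0)) (fun i => X i)
        = S * vdmProd (fun i => X i)) :
    S.totalDegree = ℓ * (m * Nat.choose a 2 + a * b) ∧
    (∀ i : Fin N, S.degreeOf i = a * ℓ) ∧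
    (m ≤ N →
      (∀ α ∈ S.support, ∀ T : Finset (Fin N), T.card = m → ∑ i ∈ T, α i ≤ (N - m) * ℓ) ∧
      (∃ α ∈ S.support, ∃ T : Finset (Fin N), T.card = m ∧ ∑ i ∈ T, α i = (N - m) * ℓ)) := by
  have hm' : 0 < m := hm
  set e1 : Fin N → ℕ := fun j => ℓ * ((N - 1 - (j : ℕ)) / m) + (N - 1 - (j : ℕ)) with he1
  set e0 : Fin N → ℕ := fun j => N - 1 - (j : ℕ) with he0
  have hP1 : shiftedVdm (mStaircase N m ℓ hm (fun _ => 0)) (fun i => X i) = detX e1 := by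
    simp [shiftedVdm, detX, mStaircase, he1]
  have hstrict1 : ∀ i j : Fin N, i < j → e1 j < e1 i := by
    intro i j hij
    rw [Fin.lt_def] at hij
    have hjN := j.isLt
    have hsub : N - 1 - (j : ℕ) < N - 1 - (i : ℕ) := by omega
    have hdiv : (N - 1 - (j : ℕ)) / m ≤ (N - 1 - (i : ℕ)) / m :=
      Nat.div_le_div_right (by omega)
    have := Nat.mul_le_mul_left ℓ hdiv
    simp only [he1]
    omega
  have hstrict0 : ∀ i j : Fin N, i < j → e0 j < e0 i := by
    intro i j hij
    rw [Fin.lt_def] at hij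
    have hjN := j.isLt
    simp only [he0]
    omega
  have hinj1 : Function.Injective e1 := by
    intro i j h
    by_contra hne
    rcases lt_or_gt_of_ne hne with hlt | hlt
    · exact absurd h (Nat.ne_of_gt (hstrict1 i j hlt))
    · exact absurd h (Nat.ne_of_lt (hstrict1 j i hlt))
  have hinj0 : Function.Injective e0 := by
    intro i j h
    by_contra hne
    rcases lt_or_gt_of_ne hne with hlt | hlt
    · exact absurd h (Nat.ne_of_gt (hstrict0 i j hlt))
    · exact absurd h (Nat.ne_of_lt (hstrict0 j i hlt))
  have hP1ne : detX e1 ≠ 0 := detX_ne_zero hinj1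
  have hP0ne : detX e0 ≠ 0 := detX_ne_zero hinj0
  have hvd : vdmProd (fun i => (X i : MvPolynomial (Fin N) ℂ)) = detX e0
      ∨ vdmProd (fun i => (X i : MvPolynomial (Fin N) ℂ)) = - detX e0 :=
    vdmProd_sign _
  have hvdne : vdmProd (fun i => (X i : MvPolynomial (Fin N) ℂ)) ≠ 0 := by
    rcases hvd with h | h <;> rw [h]
    · exact hP0ne
    · exact neg_ne_zero.mpr hP0ne
  have hSne : S ≠ 0 := by
    intro h
    rw [h, zero_mul] at hS
    exact hP1ne (by rw [← hP1, hS])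
  have key : ∀ T : Finset (Fin N),
      Dw T S = ∑ j ∈ Finset.univ.filter (fun j : Fin N => (j : ℕ) < T.card),
        ℓ * ((N - 1 - (j : ℕ)) / m) := by
    intro T
    have h1 := Dw_detX hstrict1 T
    have h0 := Dw_detX hstrict0 T
    have hmul : Dw T (detX e1) = Dw T S + Dw T (vdmProd (fun i => X i)) := by
      rw [← hP1, hS]
      exact Dw_mul T hSne hvdne
    have hvdw : Dw T (vdmProd (fun i => (X i : MvPolynomial (Fin N) ℂ))) = Dw T (detX e0) := by
      rcases hvd with h | h <;> rw [h]
      rw [Dw_neg]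
    have hsplit : ∑ j ∈ Finset.univ.filter (fun j : Fin N => (j : ℕ) < T.card), e1 j
        = (∑ j ∈ Finset.univ.filter (fun j : Fin N => (j : ℕ) < T.card),
            ℓ * ((N - 1 - (j : ℕ)) / m))
          + ∑ j ∈ Finset.univ.filter (fun j : Fin N => (j : ℕ) < T.card), e0 j := by
      rw [← Finset.sum_add_distrib]
    omega
  refine ⟨?_, ?_, ?_⟩
  · -- (i) total degree
    have hDuniv : S.totalDegree = Dw Finset.univ S := by
      rw [MvPolynomial.totalDegree]
      unfold Dw
      apply Finset.sup_congr rfl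
      intro α _
      rw [Finsupp.sum_fintype]
      intro _; rfl
    rw [hDuniv, key Finset.univ]
    have hcard : (Finset.univ : Finset (Fin N)).card = N := by
      rw [Finset.card_univ, Fintype.card_fin]
    rw [hcard]
    rw [sum_filter_lt (le_refl N) (fun t => ℓ * ((N - 1 - t) / m))]
    rw [Finset.sum_range_reflect (fun t => ℓ * (t / m)) N]
    rw [← Finset.mul_sum, sum_range_div m hm' N]
    congr 1
    rcases Nat.lt_or_ge b m with hblt | hbge
    · have hq : N / m = a := by
        rw [show N = m * a + b by rw [Nat.mul_comm m a]; omega, Nat.mul_add_div hm', Nat.div_eq_of_lt hblt,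
          Nat.add_zero]
      have hr : N % m = b := by
        rw [show N = m * a + b by rw [Nat.mul_comm m a]; omega, Nat.mul_add_mod, Nat.mod_eq_of_lt hblt]
      rw [hq, hr]
    · have hbm' : b = m := by omega
      have hNm : N = m * (a + 1) := by rw [Nat.mul_succ, Nat.mul_comm m a]; omega
      have hq : N / m = a + 1 := by rw [hNm, Nat.mul_div_cancel_left _ hm']
      have hr : N % m = 0 := by rw [hNm, Nat.mul_mod_right]
      rw [hq, hr, Nat.choose_succ_succ, Nat.choose_one_right, hbm']
      ring
  · -- (ii) degree in each variable
    intro i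
    have hDi : S.degreeOf i = Dw {i} S := by
      rw [MvPolynomial.degreeOf_eq_sup]
      unfold Dw
      apply Finset.sup_congr rfl
      intro α _
      rw [Finset.sum_singleton]
    rw [hDi, key {i}, Finset.card_singleton]
    rw [sum_filter_lt (show 1 ≤ N from hN) (fun t => ℓ * ((N - 1 - t) / m))]
    rw [Finset.sum_range_one]
    have h1 : (N - 1 - 0) / m = a := by
      rw [show N - 1 - 0 = m * a + (b - 1) by rw [Nat.mul_comm m a]; omega, Nat.mul_add_div hm',
        Nat.div_eq_of_lt (by omega), Nat.add_zero]
    rw [h1, Nat.mul_comm]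
  · -- (iii)
    intro hmN
    have hval : ∀ T : Finset (Fin N), T.card = m → Dw T S = (N - m) * ℓ := by
      intro T hT
      rw [key T, hT]
      rw [sum_filter_lt (show m ≤ N from hmN) (fun t => ℓ * ((N - 1 - t) / m))]
      have h1 : ∀ t ∈ Finset.range m, ℓ * ((N - 1 - t) / m)
          = (fun k => ℓ * (((N - m) + k) / m)) (m - 1 - t) := by
        intro t ht
        rw [Finset.mem_range] at ht
        simp only
        congr 2
        omega
      rw [Finset.sum_congr rfl h1,
        Finset.sum_range_reflect (fun k => ℓ * (((N - m) + k) / m)) m]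
      rw [← Finset.mul_sum]
      have hq1 : 1 ≤ N / m := (Nat.one_le_div_iff hm').mpr hmN
      obtain ⟨q', hq'⟩ : ∃ q', N / m = q' + 1 := ⟨N / m - 1, by omega⟩
      set r := N % m with hr
      have hrm : r < m := Nat.mod_lt _ hm'
      have hdm : m * (N / m) + N % m = N := Nat.div_add_mod N m
      rw [hq', Nat.mul_succ] at hdm
      have hNm : N - m = m * q' + r := by omega
      have hq2 : (N - m) / m = q' := by
        rw [hNm, Nat.mul_add_div hm', Nat.div_eq_of_lt hrm, Nat.add_zero]
      have hr2 : (N - m) % m = r := by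
        rw [hNm, Nat.mul_add_mod, Nat.mod_eq_of_lt hrm]
      have h2 : ∑ t ∈ Finset.range N, t / m
          = ∑ t ∈ Finset.range (N - m), t / m
            + ∑ k ∈ Finset.range m, ((N - m) + k) / m := by
        have h2' := Finset.sum_range_add (fun t => t / m) (N - m) m
        rw [show N - m + m = N by omega] at h2'
        exact h2'
      rw [sum_range_div m hm' N, sum_range_div m hm' (N - m), hq', hq2, hr2, ← hr] at h2
      rw [Nat.choose_succ_succ, Nat.choose_one_right] at h2
      have h3 : ∑ k ∈ Finset.range m, ((N - m) + k) / m = N - m := by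
        have e1 : m * (q' + Nat.choose q' 2) = m * q' + m * Nat.choose q' 2 := by ring
        have e2 : (q' + 1) * r = q' * r + r := by ring
        rw [e1, e2] at h2
        generalize m * q' = A at h2 hNm
        generalize m * Nat.choose q' 2 = B at h2
        generalize q' * r = C at h2
        omega
      rw [h3, Nat.mul_comm]
    constructor
    · intro α hα T hT
      rw [← hval T hT]
      exact le_Dw T hα
    · obtain ⟨T0, -, hT0⟩ := Finset.exists_subset_card_eq
        (show m ≤ (Finset.univ : Finset (Fin N)).card by
          rw [Finset.card_univ, Fintype.card_fin]; exact hmN)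
      obtain ⟨α, hα, hsup⟩ := Finset.exists_mem_eq_sup S.support
        (MvPolynomial.support_nonempty.mpr hSne) (fun α : Fin N →₀ ℕ => ∑ i ∈ T0, α i)
      refine ⟨α, hα, T0, hT0, ?_⟩
      have : Dw T0 S = ∑ i ∈ T0, α i := hsup
      rw [← this, hval T0 hT0]
end
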